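/- Let L be a numerical semigroup with toric ideal I_L ⊆ K[x₁,…,xₙ], and let H = ⟨cL, d⟩ with c > 1, gcd(c,d) = 1, d = Σ λᵢaᵢ ∈ L with Σλᵢ maximal. Then the toric ideal of H in K[x₁,…,x_{n+1}] equals (I_L, f) where f = x_{n+1}^c − Π xᵢ^{λᵢ}. -/

import Mathlib

open Polynomial

theorem key {R K : Type*} [CommRing R] [Nontrivial R] [CommRing K]
    (φ : R →+* Polynomial K) (c d : ℕ) (hc : 0 < c)
    (hcd : Nat.gcd c d = 1)
    (hφ : ∀ (g : R) (N : ℕ), ¬ c ∣ N → (φ g).coeff N = 0)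
    (m : R) (hm : φ m = Polynomial.X ^ (d * c)) :
    RingHom.ker (Polynomial.eval₂RingHom φ (Polynomial.X ^ d)) =
      Ideal.map Polynomial.C (RingHom.ker φ) ⊔
        Ideal.span {Polynomial.X ^ c - Polynomial.C m} := by
  set F : R[X] := X ^ c - C m with hFdef
  have hF : F.Monic := monic_X_pow_sub_C m hc.ne'
  have hΨF : eval₂ φ (X ^ d) F = 0 := by
    simp [hFdef, eval₂_sub, hm, ← pow_mul]
  apply le_antisymm
  · intro p hp
    have hp0 : eval₂ φ (X ^ d) p = 0 := hp
    set q := p /ₘ F with hq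
    set r := p %ₘ F with hr
    have hpr : r + F * q = p := modByMonic_add_div p F
    have hΨr : eval₂ φ (X ^ d) r = 0 := by
      have := congrArg (eval₂RingHom φ (X ^ d)) hpr
      simp only [map_add, map_mul, coe_eval₂RingHom] at this
      rw [hΨF, zero_mul, add_zero] at this
      rw [this, hp0]
    by_cases hr0 : r = 0
    · refine Ideal.mem_sup_right ?_
      rw [← hpr, hr0, zero_add]
      exact Ideal.mul_mem_right _ _ (Ideal.subset_span rfl)
    have hdeg : r.natDegree < c := by
      rw [natDegree_lt_iff_degree_lt hr0]
      simpa [hFdef, degree_X_pow_sub_C hc m] using degree_modByMonic_lt p hF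
    have hsum : ∑ l ∈ Finset.range c, φ (r.coeff l) * (X ^ d) ^ l = 0 := by
      rw [← eval₂_eq_sum_range' φ hdeg (X ^ d)]; exact hΨr
    have hcoeff : ∀ k, φ (r.coeff k) = 0 := by
      intro k
      by_cases hk : k < c
      · apply Polynomial.ext; intro N
        rw [coeff_zero]
        by_cases hcN : c ∣ N
        · obtain ⟨j, rfl⟩ := hcN
          have h0 := congrArg (fun g => Polynomial.coeff g (c * j + k * d)) hsum
          simp only [coeff_zero, finset_sum_coeff] at h0
          rw [Finset.sum_eq_single_of_mem k (Finset.mem_range.mpr hk)] at h0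
          · rw [← pow_mul, coeff_mul_X_pow',
              if_pos (by rw [mul_comm d k]; exact Nat.le_add_left _ _),
              mul_comm d k, Nat.add_sub_cancel] at h0
            exact h0
          · intro l hl hne
            rw [← pow_mul, coeff_mul_X_pow']
            split_ifs with hle
            · apply hφ
              intro hdvd
              have h1 : d * l ≡ c * j + k * d [MOD c] :=
                (Nat.modEq_iff_dvd' hle).mpr hdvd
              have h2 : (c * j + k * d) % c = (k * d) % c := by
                rw [Nat.add_comm, Nat.add_mul_mod_self_left]
              have h3 : d * l ≡ d * k [MOD c] := by
                have : d * l ≡ k * d [MOD c] := h1.trans h2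
                rwa [mul_comm k d] at this
              have h4 : l ≡ k [MOD c] :=
                Nat.ModEq.cancel_left_of_coprime hcd h3
              have h5 : l % c = k % c := h4
              rw [Nat.mod_eq_of_lt (Finset.mem_range.mp hl), Nat.mod_eq_of_lt hk] at h5
              exact hne h5
            · rfl
        · exact hφ _ _ hcN
      · have : r.coeff k = 0 :=
          coeff_eq_zero_of_natDegree_lt (lt_of_lt_of_le hdeg (not_lt.mp hk))
        simp [this]
    have hrmem : r ∈ Ideal.map (C : R →+* R[X]) (RingHom.ker φ) := by
      have hmem : (∑ k ∈ r.support, monomial k (r.coeff k)) ∈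
          Ideal.map (C : R →+* R[X]) (RingHom.ker φ) := by
        refine Ideal.sum_mem _ fun k _ => ?_
        rw [← C_mul_X_pow_eq_monomial]
        exact Ideal.mul_mem_right _ _
          (Ideal.mem_map_of_mem _ (by simp [RingHom.mem_ker, hcoeff k]))
      rwa [← r.as_sum_support] at hmem
    rw [← hpr]
    exact Ideal.add_mem _ (Ideal.mem_sup_left hrmem)
      (Ideal.mem_sup_right (Ideal.mul_mem_right _ _ (Ideal.subset_span rfl)))
  · rw [sup_le_iff]
    constructor
    · rw [Ideal.map_le_iff_le_comap]
      intro g hg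
      simp only [Ideal.mem_comap, RingHom.mem_ker, coe_eval₂RingHom, eval₂_C] at *
      exact hg
    · rw [Ideal.span_le, Set.singleton_subset_iff]
      exact hΨF

open MvPolynomial

theorem stmt_16 (K : Type*) [Field K] (n : ℕ) (a : Fin n → ℕ)
    (hmono : StrictMono a) (hpos : ∀ i, 0 < a i)
    (c d : ℕ) (hc : 1 < c) (hcd : Nat.gcd c d = 1)
    (lam : Fin n → ℕ) (hd : d = ∑ i, lam i * a i)
    (hmax : ∀ mu : Fin n → ℕ, d = ∑ i, mu i * a i → ∑ i, mu i ≤ ∑ i, lam i)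
    (hdL : ∀ i, d ≠ a i)
    (IL : Ideal (MvPolynomial (Fin n) K))
    (hIL : IL = RingHom.ker (MvPolynomial.aeval
        (fun i => Polynomial.X ^ a i : Fin n → Polynomial K)))
    (IH : Ideal (MvPolynomial (Fin (n + 1)) K))
    (hIH : IH = RingHom.ker (MvPolynomial.aeval
        (fun j => Polynomial.X ^ (Fin.lastCases d (fun i => c * a i) j) :
          Fin (n + 1) → Polynomial K)))
    (f : MvPolynomial (Fin (n + 1)) K)
    (hf : f = X (Fin.last n) ^ c - ∏ i, X (Fin.castSucc i) ^ lam i) :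
    IH = Ideal.map (MvPolynomial.rename (Fin.castSucc (n := n))).toRingHom IL ⊔
      Ideal.span {f} := by
  have hc0 : 0 < c := lt_trans one_pos hc
  set E : MvPolynomial (Fin (n + 1)) K ≃ₐ[K] Polynomial (MvPolynomial (Fin n) K) :=
    (renameEquiv K finSuccEquivLast).trans (optionEquivLeft K (Fin n)) with hE
  set ERing : MvPolynomial (Fin (n + 1)) K →+* Polynomial (MvPolynomial (Fin n) K) :=
    E.toAlgHom.toRingHom with hERing
  set φ : MvPolynomial (Fin n) K →ₐ[K] Polynomial K :=
    MvPolynomial.aeval (fun i => Polynomial.X ^ a i) with hφ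
  set φc : MvPolynomial (Fin n) K →+* Polynomial K :=
    (Polynomial.expand K c).toRingHom.comp φ.toRingHom with hφc
  set m : MvPolynomial (Fin n) K := ∏ i, X i ^ lam i with hmdef
  have hEc : ∀ i : Fin n, ERing (X (Fin.castSucc i)) = Polynomial.C (X i) := by
    intro i
    simp [hERing, hE, AlgEquiv.trans_apply, rename_X, optionEquivLeft_X_some]
  have hEl : ERing (X (Fin.last n)) = Polynomial.X := by
    simp [hERing, hE, AlgEquiv.trans_apply, rename_X, optionEquivLeft_X_none]
  have hEC : ∀ k : K, ERing (MvPolynomial.C k) = Polynomial.C (MvPolynomial.C k) := by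
    intro k
    simp [hERing, hE, AlgEquiv.trans_apply]
  have hφcX : ∀ i, φc (X i) = Polynomial.X ^ (c * a i) := by
    intro i
    simp [hφc, hφ, ← pow_mul, mul_comm]
  have hφcC : ∀ k : K, φc (MvPolynomial.C k) = Polynomial.C k := by
    intro k
    simp [hφc, hφ]
  have hsupp : ∀ (g : MvPolynomial (Fin n) K) (N : ℕ), ¬ c ∣ N → (φc g).coeff N = 0 := by
    intro g N hN
    rw [hφc, RingHom.comp_apply, AlgHom.toRingHom_eq_coe, AlgHom.coe_toRingHom,
      Polynomial.coeff_expand hc0, if_neg hN]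
  have hker : RingHom.ker φc = RingHom.ker φ := by
    ext x
    simp only [RingHom.mem_ker, hφc, RingHom.comp_apply, AlgHom.toRingHom_eq_coe,
      AlgHom.coe_toRingHom]
    constructor
    · intro h
      exact Polynomial.expand_injective hc0 (by rw [h, map_zero])
    · intro h
      rw [h, map_zero]
  have hφm : φ m = Polynomial.X ^ d := by
    rw [hmdef, map_prod]
    simp only [map_pow, hφ, MvPolynomial.aeval_X, ← pow_mul]
    rw [Finset.prod_pow_eq_pow_sum]
    congr 1
    rw [hd]
    exact Finset.sum_congr rfl fun i _ => by ring
  have hm : φc m = Polynomial.X ^ (d * c) := by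
    have h1 : φc m = Polynomial.expand K c (φ m) := rfl
    rw [h1, hφm, map_pow, Polynomial.expand_X, ← pow_mul, Nat.mul_comm c d]
  have hcomp : (MvPolynomial.aeval
        (fun j => Polynomial.X ^ (Fin.lastCases d (fun i => c * a i) j) :
          Fin (n + 1) → Polynomial K) : MvPolynomial (Fin (n + 1)) K →ₐ[K] Polynomial K).toRingHom
      = (Polynomial.eval₂RingHom φc (Polynomial.X ^ d)).comp ERing := by
    apply MvPolynomial.ringHom_ext
    · intro k
      simp [hEC, hφcC]
    · intro j
      induction j using Fin.lastCases with
      | last =>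
        simp [hEl, Fin.lastCases_last]
      | cast i =>
        simp [hEc, hφcX, Fin.lastCases_castSucc]
  have hEf : ERing f = Polynomial.X ^ c - Polynomial.C m := by
    rw [hf, map_sub, map_pow, hEl, hmdef, map_prod, map_prod]
    simp only [map_pow, hEc]
  have hrenC : ERing.comp (rename (Fin.castSucc (n := n))).toRingHom
      = (Polynomial.C : MvPolynomial (Fin n) K →+* Polynomial (MvPolynomial (Fin n) K)) := by
    apply MvPolynomial.ringHom_ext
    · intro k
      simp [hEC]
    · intro i
      simp [hEc]
  have hmapE : Ideal.map ERing
      (Ideal.map (rename (Fin.castSucc (n := n))).toRingHom IL ⊔ Ideal.span {f})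
      = Ideal.map Polynomial.C (RingHom.ker φc) ⊔
        Ideal.span {Polynomial.X ^ c - Polynomial.C m} := by
    rw [Ideal.map_sup, Ideal.map_map, hrenC, Ideal.map_span, Set.image_singleton, hEf,
      hker, hIL]
  have hpt : ∀ x : MvPolynomial (Fin (n + 1)) K,
      MvPolynomial.aeval
        (fun j => Polynomial.X ^ (Fin.lastCases d (fun i => c * a i) j) :
          Fin (n + 1) → Polynomial K) x
        = Polynomial.eval₂RingHom φc (Polynomial.X ^ d) (ERing x) :=
    fun x => DFunLike.congr_fun hcomp x
  have hIH' : IH = Ideal.comap ERing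
      (RingHom.ker (Polynomial.eval₂RingHom φc (Polynomial.X ^ d))) := by
    rw [hIH]
    ext x
    simp only [RingHom.mem_ker, Ideal.mem_comap, hpt x]
  rw [hIH', key φc c d hc0 hcd hsupp m hm, ← hmapE,
    Ideal.comap_map_of_bijective ERing E.bijective]
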